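/- Let a, b, c ≥ 2, e = gcd(b,c), â = gcd(a, b−1), d = e·gcd(a, c(b−1)/e). Suppose there exist positive integers α, β with aβ + dα = b−1 and c | (aβ + 1). Then gcd(a,c) = 1, b > a, b > c, and d = e·â. -/

import Mathlib

theorem stmt15 (a b c : ℤ) (ha : 2 ≤ a) (hb : 2 ≤ b) (hc : 2 ≤ c)
    (e : ℤ) (he : e = (Int.gcd b c : ℤ))
    (ahat : ℤ) (hahat : ahat = (Int.gcd a (b - 1) : ℤ))
    (d : ℤ) (hd : d = e * (Int.gcd a (c * (b - 1) / e) : ℤ))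
    (α β : ℤ) (hα : 0 < α) (hβ : 0 < β)
    (h1 : a * β + d * α = b - 1) (h2 : c ∣ a * β + 1) :
    Int.gcd a c = 1 ∧ a < b ∧ c < b ∧ d = e * ahat := by
  -- gcd a c = 1
  have gdvd : (Int.gcd a c : ℤ) ∣ 1 := by
    have h3 : (Int.gcd a c : ℤ) ∣ a * β + 1 :=
      dvd_trans (Int.gcd_dvd_right a c) h2
    have h4 : (Int.gcd a c : ℤ) ∣ a * β := Dvd.dvd.mul_right (Int.gcd_dvd_left a c) β
    simpa using dvd_sub h3 h4
  have g1 : Int.gcd a c = 1 := by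
    have := Int.ofNat_dvd.mp (by exact_mod_cast gdvd)
    exact Nat.dvd_one.mp this
  -- positivity of e
  have he1 : 1 ≤ e := by
    rw [he]
    exact_mod_cast Nat.one_le_iff_ne_zero.mpr (fun h => by
      have := Int.gcd_eq_zero_iff.mp h; omega)
  have hene : e ≠ 0 := by omega
  -- positivity of d
  have hd1 : 1 ≤ d := by
    rw [hd]
    have : 1 ≤ (Int.gcd a (c * (b - 1) / e) : ℤ) := by
      exact_mod_cast Nat.one_le_iff_ne_zero.mpr (fun h => by
        have := Int.gcd_eq_zero_iff.mp h; omega)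
    nlinarith
  have hda : 1 ≤ d * α := by nlinarith
  have hab : a * 1 ≤ a * β := by nlinarith
  have h5 : a < b := by nlinarith
  -- c < b
  obtain ⟨k, hk⟩ := h2
  have hk1 : 1 ≤ k := by nlinarith
  have hcab : c ≤ a * β + 1 := by nlinarith
  have h6 : c < b := by nlinarith
  refine ⟨g1, h5, h6, ?_⟩
  -- d = e * ahat
  obtain ⟨c', hc'⟩ : e ∣ c := he ▸ Int.gcd_dvd_right b c
  have hdiv : c * (b - 1) / e = c' * (b - 1) := by
    rw [hc', mul_assoc, Int.mul_ediv_cancel_left _ hene]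
  have hcop : IsCoprime a c' := by
    have : IsCoprime a c := Int.isCoprime_iff_gcd_eq_one.mpr g1
    exact IsCoprime.of_isCoprime_of_dvd_right this ⟨e, by rw [hc']; ring⟩
  have hcopn : Nat.Coprime c'.natAbs a.natAbs := by
    have := Int.isCoprime_iff_gcd_eq_one.mp hcop
    rw [Int.gcd] at this
    exact (Nat.coprime_comm).mp this
  have : Int.gcd a (c * (b - 1) / e) = Int.gcd a (b - 1) := by
    rw [hdiv, Int.gcd, Int.gcd, Int.natAbs_mul]
    exact hcopn.gcd_mul_left_cancel_right (b - 1).natAbs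
  rw [hd, this, hahat]
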